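/- Let p > 2, let (Ω, F, μ) be a probability space and let f: Ω → ℝ be an integrable function with lim_{t→∞} t^p μ{|f| > t} = 0. Then for every sub-σ-algebra A of F, lim_{t→∞} t^p μ{ E[|f| | A] > t } = 0. -/

import Mathlib

open MeasureTheory ProbabilityTheory Filter Set
open scoped Topology ENNReal NNReal

noncomputable section

/-- `N_p(f) = sup_{A : μ(A) > 0} μ(A)^{−1+1/p} E[|f| χ_A]`, as an extended nonnegative real. -/
def Np {Ω : Type*} [MeasurableSpace Ω] (μ : Measure Ω) (p : ℝ) (f : Ω → ℝ) : ℝ≥0∞ :=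
  ⨆ (A : Set Ω) (_ : MeasurableSet A) (_ : 0 < μ A),
    μ A ^ (-1 + 1/p) * ∫⁻ ω in A, ENNReal.ofReal |f ω| ∂μ

/-- `‖f‖_{p,∞}^p = sup_{t > 0} t^p μ{|f| > t}`, as an extended nonnegative real. -/
def wkNormPow {Ω : Type*} [MeasurableSpace Ω] (μ : Measure Ω) (p : ℝ) (f : Ω → ℝ) : ℝ≥0∞ :=
  ⨆ (t : ℝ) (_ : 0 < t), ENNReal.ofReal (t ^ p) * μ {ω | t < |f ω|}

/-- **Lemma 1.4.** If `t^p μ{|f| > t} → 0` as `t → ∞`, then for every sub-σ-algebra `A`,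
`t^p μ{E[|f| | A] > t} → 0` as `t → ∞`. -/
lemma tail_bound {Ω : Type*} [MeasurableSpace Ω] (μ : Measure Ω) [IsProbabilityMeasure μ]
    {p ε s : ℝ} (hp : 2 < p) (hε : 0 < ε) (hs : 0 < s) {f' : Ω → ℝ} (hf' : Measurable f')
    (hb : ∀ u, s ≤ u → (μ {ω | u < |f' ω|}).toReal ≤ ε * u ^ (-p)) :
    ∫⁻ ω in {ω | s < |f' ω|}, ENNReal.ofReal |f' ω| ∂μ ≤ ENNReal.ofReal (2 * ε * s ^ (1 - p)) := by
  set S := {ω | s < |f' ω|} with hSdef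
  have hS : MeasurableSet S := measurableSet_lt measurable_const hf'.abs
  have key := lintegral_eq_lintegral_meas_lt (μ.restrict S)
    (Eventually.of_forall fun ω => abs_nonneg (f' ω)) hf'.abs.aemeasurable
  have hsplit : (Ioi (0:ℝ)) = Ioc 0 s ∪ Ioi s := (Ioc_union_Ioi_eq_Ioi hs.le).symm
  have hmuS : μ S ≤ ENNReal.ofReal (ε * s ^ (-p)) := by
    rw [← ENNReal.ofReal_toReal (measure_ne_top μ S)]
    exact ENNReal.ofReal_le_ofReal (hb s le_rfl)
  have h1 : ∫⁻ u in Ioc (0:ℝ) s, (μ.restrict S) {a | u < |f' a|} ≤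
      ENNReal.ofReal (ε * s ^ (-p)) * ENNReal.ofReal s := by
    calc ∫⁻ u in Ioc (0:ℝ) s, (μ.restrict S) {a | u < |f' a|}
        ≤ ∫⁻ _ in Ioc (0:ℝ) s, μ S := by
          refine lintegral_mono fun u => ?_
          exact le_trans (measure_mono (subset_univ _)) (by rw [Measure.restrict_apply_univ])
      _ = μ S * ENNReal.ofReal s := by
          rw [setLIntegral_const, Real.volume_Ioc, sub_zero]
      _ ≤ ENNReal.ofReal (ε * s ^ (-p)) * ENNReal.ofReal s :=
          mul_le_mul_left hmuS _
  have hppos : (-p : ℝ) < -1 := by linarith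
  have hint : IntegrableOn (fun u : ℝ => ε * u ^ (-p)) (Ioi s) :=
    (integrableOn_Ioi_rpow_of_lt hppos hs).const_mul ε
  have h2 : ∫⁻ u in Ioi s, (μ.restrict S) {a | u < |f' a|} ≤
      ENNReal.ofReal (ε * (s ^ (1 - p) / (p - 1))) := by
    have step1 : ∫⁻ u in Ioi s, (μ.restrict S) {a | u < |f' a|} ≤
        ∫⁻ u in Ioi s, ENNReal.ofReal (ε * u ^ (-p)) := by
      refine setLIntegral_mono (by fun_prop) fun u hu => ?_
      have hu' : s ≤ u := le_of_lt hu
      calc (μ.restrict S) {a | u < |f' a|} ≤ μ {a | u < |f' a|} := by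
            rw [Measure.restrict_apply (measurableSet_lt measurable_const hf'.abs)]
            exact measure_mono inter_subset_left
        _ ≤ ENNReal.ofReal (ε * u ^ (-p)) := by
            rw [← ENNReal.ofReal_toReal (measure_ne_top μ _)]
            exact ENNReal.ofReal_le_ofReal (hb u hu')
    have hnn : 0 ≤ᵐ[volume.restrict (Ioi s)] fun u : ℝ => ε * u ^ (-p) := by
      filter_upwards [ae_restrict_mem measurableSet_Ioi] with u hu
      exact mul_nonneg hε.le (Real.rpow_nonneg (le_of_lt (hs.trans hu)) _)
    have step2 : ∫⁻ u in Ioi s, ENNReal.ofReal (ε * u ^ (-p)) =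
        ENNReal.ofReal (∫ u in Ioi s, ε * u ^ (-p)) :=
      (ofReal_integral_eq_lintegral_ofReal hint hnn).symm
    have hval : ∫ u in Ioi s, ε * u ^ (-p) = ε * (s ^ (1 - p) / (p - 1)) := by
      rw [MeasureTheory.integral_const_mul, integral_Ioi_rpow_of_lt hppos hs]
      congr 1
      have h1p : (-p : ℝ) + 1 = 1 - p := by ring
      rw [h1p]
      have h2p : (1 : ℝ) - p = -(p - 1) := by ring
      rw [h2p, neg_div_neg_eq]
    have h := step1.trans (le_of_eq step2)
    rwa [hval] at h
  have hcomb : ε * s ^ (-p) * s + ε * (s ^ (1 - p) / (p - 1)) ≤ 2 * ε * s ^ (1 - p) := by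
    have hX : s ^ (-p) * s = s ^ (1 - p) := by
      rw [show (1:ℝ) - p = -p + 1 by ring, Real.rpow_add hs, Real.rpow_one]
    have hXnn : (0:ℝ) ≤ s ^ (1 - p) := Real.rpow_nonneg hs.le _
    have hdiv : s ^ (1 - p) / (p - 1) ≤ s ^ (1 - p) :=
      div_le_self hXnn (by linarith)
    have : ε * (s ^ (1 - p) / (p - 1)) ≤ ε * s ^ (1 - p) :=
      mul_le_mul_of_nonneg_left hdiv hε.le
    nlinarith [hX]
  calc ∫⁻ ω in S, ENNReal.ofReal |f' ω| ∂μ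
      = ∫⁻ u in Ioi (0:ℝ), (μ.restrict S) {a | u < |f' a|} := key
    _ = (∫⁻ u in Ioc (0:ℝ) s, (μ.restrict S) {a | u < |f' a|}) +
        ∫⁻ u in Ioi s, (μ.restrict S) {a | u < |f' a|} := by
        rw [hsplit, lintegral_union measurableSet_Ioi (Ioc_disjoint_Ioi le_rfl)]
    _ ≤ ENNReal.ofReal (ε * s ^ (-p)) * ENNReal.ofReal s +
        ENNReal.ofReal (ε * (s ^ (1 - p) / (p - 1))) := add_le_add h1 h2
    _ = ENNReal.ofReal (ε * s ^ (-p) * s + ε * (s ^ (1 - p) / (p - 1))) := by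
        rw [← ENNReal.ofReal_mul (mul_nonneg hε.le (Real.rpow_nonneg hs.le _)),
          ENNReal.ofReal_add (by positivity)
            (mul_nonneg hε.le (div_nonneg (Real.rpow_nonneg hs.le _) (by linarith)))]
    _ ≤ ENNReal.ofReal (2 * ε * s ^ (1 - p)) := ENNReal.ofReal_le_ofReal hcomb

theorem statement5 {Ω : Type*} [mΩ : MeasurableSpace Ω] (μ : Measure Ω)
    [IsProbabilityMeasure μ] (p : ℝ) (hp : 2 < p)
    (f : Ω → ℝ) (hf_int : Integrable f μ)
    (htail : Tendsto (fun t : ℝ => t ^ p * (μ {ω | t < |f ω|}).toReal) atTop (𝓝 0))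
    (A : MeasurableSpace Ω) (hA : A ≤ mΩ) :
    Tendsto (fun t : ℝ => t ^ p * (μ {ω | t < (μ[(fun ω' => |f ω'|) | A]) ω}).toReal)
      atTop (𝓝 0) := by
  set g := μ[(fun ω' => |f ω'|) | A] with hgdef
  -- measurable representative of f
  set f' := hf_int.aestronglyMeasurable.mk f with hf'def
  have hff' : f =ᵐ[μ] f' := hf_int.aestronglyMeasurable.ae_eq_mk
  have hf'm : Measurable[mΩ] f' := hf_int.aestronglyMeasurable.stronglyMeasurable_mk.measurable
  have hf'int : Integrable f' μ := hf_int.congr hff'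
  have htq : ∀ u : ℝ, μ {ω | u < |f ω|} = μ {ω | u < |f' ω|} := by
    intro u
    apply measure_congr
    filter_upwards [hff'] with ω h
    show (u < |f ω|) = (u < |f' ω|)
    rw [h]
  -- basic facts about g
  have hg_meas : Measurable[A] g := stronglyMeasurable_condExp.measurable
  have hg_nn : 0 ≤ᵐ[μ] g := condExp_nonneg (Eventually.of_forall fun ω => abs_nonneg (f ω))
  have hg_int : Integrable g μ := integrable_condExp
  rw [Metric.tendsto_atTop]
  intro δ hδ
  set C : ℝ := 2 ^ p * 2 with hCdef
  have hC : 0 < C := by positivity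
  set ε : ℝ := δ / (2 * C) with hεdef
  have hε : 0 < ε := by positivity
  -- get s0 from the tail hypothesis
  obtain ⟨s0', hs0'⟩ := eventually_atTop.1 (htail.eventually (gt_mem_nhds hε))
  set s0 : ℝ := max s0' 1 with hs0def
  have hs0_one : (1:ℝ) ≤ s0 := le_max_right _ _
  have hb : ∀ u, s0 ≤ u → (μ {ω | u < |f' ω|}).toReal ≤ ε * u ^ (-p) := by
    intro u hu
    have hupos : 0 < u := lt_of_lt_of_le zero_lt_one (hs0_one.trans hu)
    have h := hs0' u ((le_max_left _ _).trans hu)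
    rw [htq u] at h
    have hup : 0 < u ^ p := Real.rpow_pos_of_pos hupos p
    rw [Real.rpow_neg hupos.le, ← div_eq_mul_inv]
    rw [le_div_iff₀ hup]
    nlinarith [h]
  refine ⟨2 * s0, fun t ht => ?_⟩
  set s : ℝ := t / 2 with hsdef
  have hs_ge : s0 ≤ s := by
    rw [hsdef]; linarith
  have hs : 0 < s := lt_of_lt_of_le (by linarith : (0:ℝ) < s0) hs_ge
  have hts : t = 2 * s := by rw [hsdef]; ring
  have htpos : 0 < t := by rw [hts]; linarith
  set Bg : Set Ω := {ω | t < g ω} with hBgdef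
  have hBgA : MeasurableSet[A] Bg := hg_meas measurableSet_Ioi
  have hBg : MeasurableSet[mΩ] Bg := hA _ hBgA
  set S : Set Ω := {ω | s < |f' ω|} with hSdef
  have hf'absm : Measurable[mΩ] (fun ω => |f' ω|) := @Measurable.abs ℝ Ω _ _ _ mΩ f' _ _ hf'm
  have hS : MeasurableSet[mΩ] S := hf'absm measurableSet_Ioi
  -- tail bound for u ≥ s
  have hb' : ∀ u, s ≤ u → (μ {ω | u < |f' ω|}).toReal ≤ ε * u ^ (-p) :=
    fun u hu => hb u (hs_ge.trans hu)
  have htb := @tail_bound Ω mΩ μ ‹_› p ε s hp hε hs f' hf'm hb'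
  -- chain of (in)equalities
  have step1 : ENNReal.ofReal t * μ Bg ≤ ∫⁻ ω in Bg, ENNReal.ofReal (g ω) ∂μ := by
    rw [← setLIntegral_const Bg (ENNReal.ofReal t)]
    have hgm : Measurable[mΩ] g := (stronglyMeasurable_condExp.mono hA).measurable
    refine setLIntegral_mono (ENNReal.measurable_ofReal.comp hgm) fun ω hω => ?_
    exact ENNReal.ofReal_le_ofReal (le_of_lt hω)
  have step2 : ∫⁻ ω in Bg, ENNReal.ofReal (g ω) ∂μ = ENNReal.ofReal (∫ ω in Bg, g ω ∂μ) :=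
    (ofReal_integral_eq_lintegral_ofReal hg_int.restrict (ae_restrict_of_ae hg_nn)).symm
  have step3 : ∫ ω in Bg, g ω ∂μ = ∫ ω in Bg, |f ω| ∂μ :=
    setIntegral_condExp hA hf_int.abs hBgA
  have step4 : ∫ ω in Bg, |f ω| ∂μ = ∫ ω in Bg, |f' ω| ∂μ :=
    integral_congr_ae (ae_restrict_of_ae (hff'.mono fun ω h => by simp only [h]))
  have step5 : ENNReal.ofReal (∫ ω in Bg, |f' ω| ∂μ) = ∫⁻ ω in Bg, ENNReal.ofReal |f' ω| ∂μ :=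
    ofReal_integral_eq_lintegral_ofReal hf'int.abs.restrict
      (ae_restrict_of_ae (Eventually.of_forall fun ω => abs_nonneg _))
  have step6 : ∫⁻ ω in Bg, ENNReal.ofReal |f' ω| ∂μ ≤
      ENNReal.ofReal s * μ Bg + ∫⁻ ω in S, ENNReal.ofReal |f' ω| ∂μ := by
    calc ∫⁻ ω in Bg, ENNReal.ofReal |f' ω| ∂μ
        ≤ ∫⁻ ω in Bg, (ENNReal.ofReal s + S.indicator (fun ω => ENNReal.ofReal |f' ω|) ω) ∂μ := by
          refine lintegral_mono fun ω => ?_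
          rcases le_or_gt (|f' ω|) s with h | h
          · exact le_trans (ENNReal.ofReal_le_ofReal h) le_self_add
          · have hmem : ω ∈ S := h
            rw [Set.indicator_of_mem hmem]
            exact le_add_self
      _ = ENNReal.ofReal s * μ Bg + ∫⁻ ω in Bg, S.indicator (fun ω => ENNReal.ofReal |f' ω|) ω ∂μ := by
          rw [lintegral_add_left (@measurable_const ℝ≥0∞ Ω _ mΩ _), setLIntegral_const]
      _ ≤ ENNReal.ofReal s * μ Bg + ∫⁻ ω, S.indicator (fun ω => ENNReal.ofReal |f' ω|) ω ∂μ :=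
          add_le_add_right (setLIntegral_le_lintegral _ _) _
      _ = ENNReal.ofReal s * μ Bg + ∫⁻ ω in S, ENNReal.ofReal |f' ω| ∂μ := by
          rw [lintegral_indicator hS]
  have chain : ENNReal.ofReal t * μ Bg ≤
      ENNReal.ofReal s * μ Bg + ENNReal.ofReal (2 * ε * s ^ (1 - p)) := by
    calc ENNReal.ofReal t * μ Bg ≤ ∫⁻ ω in Bg, ENNReal.ofReal (g ω) ∂μ := step1
      _ = ∫⁻ ω in Bg, ENNReal.ofReal |f' ω| ∂μ := by rw [step2, step3, step4, step5]
      _ ≤ ENNReal.ofReal s * μ Bg + ∫⁻ ω in S, ENNReal.ofReal |f' ω| ∂μ := step6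
      _ ≤ ENNReal.ofReal s * μ Bg + ENNReal.ofReal (2 * ε * s ^ (1 - p)) :=
          add_le_add_right htb _
  -- cancel
  have hsplitt : ENNReal.ofReal t * μ Bg = ENNReal.ofReal s * μ Bg + ENNReal.ofReal s * μ Bg := by
    rw [← add_mul, ← ENNReal.ofReal_add hs.le hs.le]
    congr 2
    rw [hts]; ring
  have hfin : ENNReal.ofReal s * μ Bg ≠ ⊤ :=
    ENNReal.mul_ne_top ENNReal.ofReal_ne_top (measure_ne_top μ _)
  have hkey : ENNReal.ofReal s * μ Bg ≤ ENNReal.ofReal (2 * ε * s ^ (1 - p)) := by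
    rw [hsplitt] at chain
    exact (ENNReal.add_le_add_iff_left hfin).1 chain
  have hkeyR : s * (μ Bg).toReal ≤ 2 * ε * s ^ (1 - p) := by
    have h := ENNReal.toReal_mono ENNReal.ofReal_ne_top hkey
    rw [ENNReal.toReal_mul, ENNReal.toReal_ofReal hs.le, ENNReal.toReal_ofReal
      (by positivity)] at h
    exact h
  -- final real computation
  have hXnn : (0:ℝ) ≤ (μ Bg).toReal := ENNReal.toReal_nonneg
  have hsp1 : s ^ (1 - p) = s ^ (-p) * s := by
    rw [show (1:ℝ) - p = -p + 1 by ring, Real.rpow_add hs, Real.rpow_one]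
  have hx : (μ Bg).toReal ≤ 2 * ε * s ^ (-p) := by
    rw [hsp1] at hkeyR
    have := le_of_mul_le_mul_right (by linarith [hkeyR] : (μ Bg).toReal * s ≤ 2 * ε * s ^ (-p) * s) hs
    exact this
  have htp : t ^ p = 2 ^ p * s ^ p := by
    rw [hts, Real.mul_rpow (by norm_num) hs.le]
  have hcanc : s ^ p * s ^ (-p) = 1 := by
    rw [← Real.rpow_add hs]; simp
  have hfinal : t ^ p * (μ Bg).toReal ≤ C * ε := by
    have htpnn : (0:ℝ) ≤ t ^ p := Real.rpow_nonneg htpos.le _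
    calc t ^ p * (μ Bg).toReal ≤ t ^ p * (2 * ε * s ^ (-p)) :=
          mul_le_mul_of_nonneg_left hx htpnn
      _ = C * ε := by
          rw [htp, hCdef]
          linear_combination (2 ^ p * 2 * ε) * hcanc
  -- conclude
  have hFnn : 0 ≤ t ^ p * (μ Bg).toReal :=
    mul_nonneg (Real.rpow_nonneg htpos.le _) hXnn
  rw [Real.dist_eq, sub_zero, abs_of_nonneg hFnn]
  have : C * ε = δ / 2 := by
    rw [hεdef]; field_simp
  calc t ^ p * (μ Bg).toReal ≤ C * ε := hfinal
    _ = δ / 2 := this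
    _ < δ := by linarith
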